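/- Let γ > 1 and ℓ := 2/(γ−1). For every (V₋, C₋) ∈ ℝ² with C₋ < −(1+V₋) < 0, there exists a unique (V₊, C₊) ∈ ℝ² with −(1+V₊) < C₊ < 0 such that the pair satisfies the self-similar Rankine–Hugoniot relations. Conversely, for every (V₊, C₊) with −(1+V₊) < C₊ < 0 there exists a unique (V₋, C₋) with C₋ < −(1+V₋) < 0 such that the pair satisfies the self-similar Rankine–Hugoniot relations. (These are admissible self-similar 2-shocks in the case ξ̄/λ > 0, with left states in S²₋ := {C < −(1+V) < 0} and right states in S²₊ := {−(1+V) < C < 0}.) -/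

import Mathlib

/-- The self-similar Rankine–Hugoniot relations for the 1-d isentropic Euler
system (with `ℓ = 2/(γ−1)`), relating a left state `Pm = (V₋, C₋)` and a right
state `Pp = (V₊, C₊)`. -/
def RH (γ : ℝ) (Pm Pp : ℝ × ℝ) : Prop :=
  |Pm.2| ^ (2 / (γ - 1)) * (1 + Pm.1) = |Pp.2| ^ (2 / (γ - 1)) * (1 + Pp.1) ∧
  |Pm.2| ^ (2 / (γ - 1)) * ((1 + Pm.1) ^ 2 + Pm.2 ^ 2 / γ)
    = |Pp.2| ^ (2 / (γ - 1)) * ((1 + Pp.1) ^ 2 + Pp.2 ^ 2 / γ)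


noncomputable def fRH (m l γ : ℝ) : ℝ → ℝ := fun c => m ^ 2 * c ^ (-l) + c ^ (l + 2) / γ

lemma hasDerivAt_fRH (m l γ : ℝ) {c : ℝ} (hc : 0 < c) :
    HasDerivAt (fRH m l γ) (m ^ 2 * (-l * c ^ (-l - 1)) + (l + 2) * c ^ (l + 1) / γ) c := by
  have h1 := (Real.hasDerivAt_rpow_const (p := -l) (Or.inl hc.ne')).const_mul (m ^ 2)
  have h2 := (Real.hasDerivAt_rpow_const (p := l + 2) (Or.inl hc.ne')).div_const γ
  have h := h1.add h2
  rw [show l + 2 - 1 = l + 1 by ring] at h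
  exact h

lemma deriv_fRH (m l γ : ℝ) (hγ0 : 0 < γ) (hgl : γ * l = l + 2) {c : ℝ} (hc : 0 < c) :
    deriv (fRH m l γ) c = l * (c ^ (l + 1) - m ^ 2 * (c ^ (l + 1))⁻¹) := by
  rw [(hasDerivAt_fRH m l γ hc).deriv]
  have h1 : c ^ (-l - 1) = (c ^ (l + 1))⁻¹ := by
    rw [show -l - 1 = -(l + 1) by ring, Real.rpow_neg hc.le]
  have h2 : (l + 2) / γ = l := by field_simp; linarith [hgl]
  rw [h1]
  field_simp
  linear_combination (- c ^ (l+1) * c ^ (l+1)) * hgl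

lemma fRH_pos (m l γ : ℝ) (hγ0 : 0 < γ) (hm : 0 < m) {c : ℝ} (hc : 0 < c) :
    0 < fRH m l γ c := by
  have h1 := Real.rpow_pos_of_pos hc (-l)
  have h2 := Real.rpow_pos_of_pos hc (l + 2)
  unfold fRH
  positivity

lemma fRH_continuousOn (m l γ : ℝ) {s : Set ℝ} (hs : ∀ x ∈ s, (0:ℝ) < x) :
    ContinuousOn (fRH m l γ) s := fun x hx =>
  ((hasDerivAt_fRH m l γ (hs x hx)).continuousAt).continuousWithinAt

lemma fRH_strictAntiOn (m l γ : ℝ) (hγ0 : 0 < γ) (hl0 : 0 < l) (hgl : γ * l = l + 2)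
    (hm : 0 < m) : StrictAntiOn (fRH m l γ) (Set.Ioc 0 (m ^ (l + 1)⁻¹)) := by
  have hl1 : (0:ℝ) < l + 1 := by linarith
  apply strictAntiOn_of_deriv_neg (convex_Ioc _ _)
  · exact fRH_continuousOn m l γ (fun x hx => hx.1)
  · intro x hx
    rw [interior_Ioc] at hx
    rw [deriv_fRH m l γ hγ0 hgl hx.1]
    have hs : 0 < x ^ (l + 1) := Real.rpow_pos_of_pos hx.1 _
    have hsm : x ^ (l + 1) < m := by
      have := Real.rpow_lt_rpow hx.1.le hx.2 hl1
      rwa [Real.rpow_inv_rpow hm.le hl1.ne'] at this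
    have h3 : x ^ (l + 1) < m ^ 2 * (x ^ (l + 1))⁻¹ := by
      rw [lt_mul_inv_iff₀ hs]
      nlinarith
    nlinarith [mul_pos hl0 (sub_pos.2 h3)]

lemma fRH_strictMonoOn (m l γ : ℝ) (hγ0 : 0 < γ) (hl0 : 0 < l) (hgl : γ * l = l + 2)
    (hm : 0 < m) : StrictMonoOn (fRH m l γ) (Set.Ici (m ^ (l + 1)⁻¹)) := by
  have hl1 : (0:ℝ) < l + 1 := by linarith
  have hcstar : 0 < m ^ (l + 1)⁻¹ := Real.rpow_pos_of_pos hm _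
  apply strictMonoOn_of_deriv_pos (convex_Ici _)
  · exact fRH_continuousOn m l γ (fun x hx => lt_of_lt_of_le hcstar hx)
  · intro x hx
    rw [interior_Ici] at hx
    have hx0 : 0 < x := lt_trans hcstar hx
    rw [deriv_fRH m l γ hγ0 hgl hx0]
    have hs : 0 < x ^ (l + 1) := Real.rpow_pos_of_pos hx0 _
    have hsm : m < x ^ (l + 1) := by
      have := Real.rpow_lt_rpow hcstar.le hx hl1
      rwa [Real.rpow_inv_rpow hm.le hl1.ne'] at this
    have : m ^ 2 * (x ^ (l + 1))⁻¹ < x ^ (l + 1) := by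
      rw [mul_inv_lt_iff₀ hs]
      nlinarith
    nlinarith [mul_pos hl0 (sub_pos.2 this)]

lemma exists_unique_lt (m l γ A : ℝ) (hγ0 : 0 < γ) (hl0 : 0 < l) (hgl : γ * l = l + 2)
    (hm : 0 < m) (hA : fRH m l γ (m ^ (l + 1)⁻¹) < A) :
    ∃! c : ℝ, (0 < c ∧ c ^ (l + 1) < m) ∧ fRH m l γ c = A := by
  have hl1 : (0:ℝ) < l + 1 := by linarith
  set cstar := m ^ (l + 1)⁻¹ with hcs
  have hcstar : 0 < cstar := Real.rpow_pos_of_pos hm _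
  have hA0 : 0 < A := lt_trans (fRH_pos m l γ hγ0 hm hcstar) hA
  set ε := min (cstar / 2) ((m ^ 2 / A) ^ l⁻¹) with hε
  have hε0 : 0 < ε := lt_min (by linarith) (Real.rpow_pos_of_pos (by positivity) _)
  have hεc : ε < cstar := lt_of_le_of_lt (min_le_left _ _) (by linarith)
  have hfε : A ≤ fRH m l γ ε := by
    have h1 : ε ^ l ≤ m ^ 2 / A := by
      have := Real.rpow_le_rpow hε0.le (min_le_right (cstar / 2) ((m ^ 2 / A) ^ l⁻¹)) hl0.le
      rwa [Real.rpow_inv_rpow (by positivity) hl0.ne'] at this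
    have hεl : 0 < ε ^ l := Real.rpow_pos_of_pos hε0 _
    have h2 : A ≤ m ^ 2 * ε ^ (-l) := by
      rw [Real.rpow_neg hε0.le, ← div_eq_mul_inv, le_div_iff₀ hεl]
      calc A * ε ^ l ≤ A * (m ^ 2 / A) := by
            exact mul_le_mul_of_nonneg_left h1 hA0.le
        _ = m ^ 2 := by field_simp
    have h3 : 0 < ε ^ (l + 2) / γ := by positivity
    unfold fRH; linarith
  have hcont : ContinuousOn (fRH m l γ) (Set.Icc ε cstar) :=
    fRH_continuousOn m l γ (fun x hx => lt_of_lt_of_le hε0 hx.1)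
  obtain ⟨c, hcmem, hfc⟩ := intermediate_value_Icc' hεc.le hcont ⟨hA.le, hfε⟩
  have hc0 : 0 < c := lt_of_lt_of_le hε0 hcmem.1
  have hcne : c < cstar := lt_of_le_of_ne hcmem.2 (by
    intro h; rw [h] at hfc; exact absurd hfc (ne_of_lt hA))
  have hclt : c ^ (l + 1) < m := by
    have := Real.rpow_lt_rpow hc0.le hcne hl1
    rwa [Real.rpow_inv_rpow hm.le hl1.ne'] at this
  have hanti := fRH_strictAntiOn m l γ hγ0 hl0 hgl hm
  refine ⟨c, ⟨⟨hc0, hclt⟩, hfc⟩, ?_⟩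
  rintro y ⟨⟨hy0, hym⟩, hfy⟩
  have hy_le : y ≤ cstar := by
    by_contra h
    push_neg at h
    have := Real.rpow_le_rpow hcstar.le h.le hl1.le
    rw [Real.rpow_inv_rpow hm.le hl1.ne'] at this
    linarith
  exact hanti.injOn ⟨hy0, hy_le⟩ ⟨hc0, hcne.le⟩ (by rw [hfy, hfc])

lemma exists_unique_gt (m l γ A : ℝ) (hγ0 : 0 < γ) (hl0 : 0 < l) (hgl : γ * l = l + 2)
    (hm : 0 < m) (hA : fRH m l γ (m ^ (l + 1)⁻¹) < A) :
    ∃! c : ℝ, (0 < c ∧ m < c ^ (l + 1)) ∧ fRH m l γ c = A := by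
  have hl1 : (0:ℝ) < l + 1 := by linarith
  have hl2 : (0:ℝ) < l + 2 := by linarith
  set cstar := m ^ (l + 1)⁻¹ with hcs
  have hcstar : 0 < cstar := Real.rpow_pos_of_pos hm _
  have hA0 : 0 < A := lt_trans (fRH_pos m l γ hγ0 hm hcstar) hA
  set M := max (cstar + 1) ((γ * A) ^ (l + 2)⁻¹) with hM
  have hMc : cstar < M := lt_of_lt_of_le (by linarith) (le_max_left _ _)
  have hM0 : 0 < M := lt_trans hcstar hMc
  have hfM : A ≤ fRH m l γ M := by
    have h1 : γ * A ≤ M ^ (l + 2) := by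
      have := Real.rpow_le_rpow (by positivity : (0:ℝ) ≤ (γ * A) ^ (l + 2)⁻¹)
        (le_max_right (cstar + 1) ((γ * A) ^ (l + 2)⁻¹)) hl2.le
      rwa [Real.rpow_inv_rpow (by positivity) hl2.ne'] at this
    have h2 : A ≤ M ^ (l + 2) / γ := by
      rw [le_div_iff₀ hγ0]; linarith
    have h3 : 0 < m ^ 2 * M ^ (-l) := by
      have := Real.rpow_pos_of_pos hM0 (-l); positivity
    unfold fRH; linarith
  have hcont : ContinuousOn (fRH m l γ) (Set.Icc cstar M) :=
    fRH_continuousOn m l γ (fun x hx => lt_of_lt_of_le hcstar hx.1)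
  obtain ⟨c, hcmem, hfc⟩ := intermediate_value_Icc hMc.le hcont ⟨hA.le, hfM⟩
  have hcne : cstar < c := lt_of_le_of_ne hcmem.1 (by
    intro h; rw [← h] at hfc; exact absurd hfc (ne_of_lt hA))
  have hc0 : 0 < c := lt_trans hcstar hcne
  have hclt : m < c ^ (l + 1) := by
    have := Real.rpow_lt_rpow hcstar.le hcne hl1
    rwa [Real.rpow_inv_rpow hm.le hl1.ne'] at this
  have hmono := fRH_strictMonoOn m l γ hγ0 hl0 hgl hm
  refine ⟨c, ⟨⟨hc0, hclt⟩, hfc⟩, ?_⟩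
  rintro y ⟨⟨hy0, hym⟩, hfy⟩
  have hy_ge : cstar ≤ y := by
    by_contra h
    push_neg at h
    have := Real.rpow_le_rpow hy0.le h.le hl1.le
    rw [Real.rpow_inv_rpow hm.le hl1.ne'] at this
    linarith
  exact hmono.injOn hy_ge hcne.le (by rw [hfy, hfc])

lemma mom_eq (γ l : ℝ) {V C m : ℝ} (hC : C < 0) (h1 : (-C) ^ l * (1 + V) = m) :
    |C| ^ l * ((1 + V) ^ 2 + C ^ 2 / γ) = fRH m l γ (-C) := by
  have hc : 0 < -C := neg_pos.2 hC
  have habs : |C| = -C := abs_of_neg hC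
  have hne : ((-C) : ℝ) ^ l ≠ 0 := (Real.rpow_pos_of_pos hc l).ne'
  have e1 : (-C) ^ l * (1 + V) ^ 2 = m ^ 2 * (-C) ^ (-l) := by
    rw [Real.rpow_neg hc.le, ← h1]
    field_simp
  have e2 : (-C) ^ l * C ^ 2 = (-C) ^ (l + 2) := by
    rw [Real.rpow_add hc, show ((2:ℝ)) = ((2:ℕ):ℝ) by norm_num, Real.rpow_natCast]
    ring
  unfold fRH
  rw [habs]
  linear_combination e1 + e2 / γ

/-- admissible self-similar 2-shocks with `ξ̄/λ > 0`: each left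
state in `S²₋ = {C < −(1+V) < 0}` has a unique right state in
`S²₊ = {−(1+V) < C < 0}` satisfying the Rankine–Hugoniot relations, and
conversely. -/
theorem stmt_15 (γ : ℝ) (hγ : 1 < γ) :
    (∀ Vm Cm : ℝ, Cm < -(1 + Vm) → -(1 + Vm) < 0 →
      ∃! Pp : ℝ × ℝ, (-(1 + Pp.1) < Pp.2 ∧ Pp.2 < 0) ∧ RH γ (Vm, Cm) Pp) ∧
    (∀ Vp Cp : ℝ, -(1 + Vp) < Cp → Cp < 0 →
      ∃! Pm : ℝ × ℝ, (Pm.2 < -(1 + Pm.1) ∧ -(1 + Pm.1) < 0) ∧ RH γ Pm (Vp, Cp)) := by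
  have hγ0 : (0:ℝ) < γ := by linarith
  have hsub : (0:ℝ) < γ - 1 := by linarith
  set l : ℝ := 2 / (γ - 1) with hl
  have hl0 : 0 < l := by positivity
  have hgl : γ * l = l + 2 := by rw [hl]; field_simp; ring
  have hl1 : (0:ℝ) < l + 1 := by linarith
  constructor
  · -- forward direction
    intro Vm Cm h1 h2
    have hu : 0 < 1 + Vm := by linarith
    have hc : 0 < -Cm := by linarith
    have hcu : 1 + Vm < -Cm := by linarith
    have habs : |Cm| = -Cm := abs_of_neg (by linarith)
    set m := (-Cm) ^ l * (1 + Vm) with hm_def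
    have hm : 0 < m := mul_pos (Real.rpow_pos_of_pos hc l) hu
    have hmlt : m < (-Cm) ^ (l + 1) := by
      rw [Real.rpow_add hc, Real.rpow_one, hm_def]
      exact (mul_lt_mul_iff_right₀ (Real.rpow_pos_of_pos hc l)).2 hcu
    have hcstar_lt : m ^ (l + 1)⁻¹ < -Cm := by
      have := Real.rpow_lt_rpow hm.le hmlt (inv_pos.2 hl1)
      rwa [Real.rpow_rpow_inv hc.le hl1.ne'] at this
    have hA : fRH m l γ (m ^ (l + 1)⁻¹) < fRH m l γ (-Cm) :=
      fRH_strictMonoOn m l γ hγ0 hl0 hgl hm (Set.self_mem_Ici)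
        (Set.mem_Ici.2 hcstar_lt.le) hcstar_lt
    obtain ⟨c, ⟨⟨hc0, hclt⟩, hfc⟩, huniq⟩ :=
      exists_unique_lt m l γ (fRH m l γ (-Cm)) hγ0 hl0 hgl hm hA
    have hclpos : (0:ℝ) < c ^ l := Real.rpow_pos_of_pos hc0 l
    have hkey : c ^ l * (m / c ^ l) = m := by field_simp
    have hcltu : c < m / c ^ l := by
      rw [lt_div_iff₀ hclpos]
      calc c * c ^ l = c ^ (l + 1) := by
            rw [Real.rpow_add hc0, Real.rpow_one]; ring
        _ < m := hclt
    have habsc : |(-c)| = c := by rw [abs_neg, abs_of_pos hc0]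
    have hRHfirst : (-(-c)) ^ l * (1 + (m / c ^ l - 1)) = m := by
      rw [neg_neg, show 1 + (m / c ^ l - 1) = m / c ^ l by ring]; exact hkey
    refine ⟨(m / c ^ l - 1, -c), ⟨⟨by simp only; linarith, by simp only; linarith⟩, ?_, ?_⟩, ?_⟩
    · -- first RH relation
      show |Cm| ^ l * (1 + Vm) = |(-c)| ^ l * (1 + (m / c ^ l - 1))
      rw [habs, habsc, show 1 + (m / c ^ l - 1) = m / c ^ l by ring, hkey, hm_def]
    · -- second RH relation
      show |Cm| ^ l * ((1 + Vm) ^ 2 + Cm ^ 2 / γ)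
          = |(-c)| ^ l * ((1 + (m / c ^ l - 1)) ^ 2 + (-c) ^ 2 / γ)
      rw [mom_eq γ l (show Cm < 0 by linarith) hm_def.symm,
        mom_eq γ l (show -c < 0 by linarith) hRHfirst, neg_neg, hfc]
    · -- uniqueness
      rintro ⟨V, C⟩ ⟨⟨hg1, hg2⟩, hRH1, hRH2⟩
      simp only at hg1 hg2
      have hC0 : C < 0 := hg2
      have hcC : 0 < -C := by linarith
      have huV : -C < 1 + V := by linarith
      have habsC : |C| = -C := abs_of_neg hC0
      simp only at hRH1 hRH2
      have hRH1' : (-C) ^ l * (1 + V) = m := by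
        rw [habs, habsC] at hRH1
        exact hRH1.symm.trans hm_def.symm
      have hfC : fRH m l γ (-C) = fRH m l γ (-Cm) := by
        rw [← mom_eq γ l hC0 hRH1', ← mom_eq γ l (show Cm < 0 by linarith) hm_def.symm]
        exact hRH2.symm
      have hcond : (-C) ^ (l + 1) < m := by
        rw [Real.rpow_add hcC, Real.rpow_one]
        calc (-C) ^ l * (-C) < (-C) ^ l * (1 + V) :=
              (mul_lt_mul_iff_right₀ (Real.rpow_pos_of_pos hcC l)).2 huV
          _ = m := hRH1'
      have hcc : -C = c := huniq (-C) ⟨⟨hcC, hcond⟩, hfC⟩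
      have hCeq : C = -c := by linarith
      have hVeq : V = m / c ^ l - 1 := by
        rw [hcc] at hRH1'
        have := eq_div_of_mul_eq hclpos.ne' (by linarith [hRH1'] : (1 + V) * c ^ l = m)
        linarith
      rw [Prod.mk.injEq]
      exact ⟨hVeq, hCeq⟩
  · -- backward direction
    intro Vp Cp h1 h2
    have hc : 0 < -Cp := by linarith
    have hu : 0 < 1 + Vp := by linarith
    have hcu : -Cp < 1 + Vp := by linarith
    have habs : |Cp| = -Cp := abs_of_neg (by linarith)
    set m := (-Cp) ^ l * (1 + Vp) with hm_def
    have hm : 0 < m := mul_pos (Real.rpow_pos_of_pos hc l) hu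
    have hmgt : (-Cp) ^ (l + 1) < m := by
      rw [Real.rpow_add hc, Real.rpow_one, hm_def]
      exact (mul_lt_mul_iff_right₀ (Real.rpow_pos_of_pos hc l)).2 hcu
    have hcstar_gt : -Cp < m ^ (l + 1)⁻¹ := by
      have := Real.rpow_lt_rpow (Real.rpow_pos_of_pos hc (l+1)).le hmgt (inv_pos.2 hl1)
      rwa [Real.rpow_rpow_inv hc.le hl1.ne'] at this
    have hcstar0 : 0 < m ^ (l + 1)⁻¹ := Real.rpow_pos_of_pos hm _
    have hA : fRH m l γ (m ^ (l + 1)⁻¹) < fRH m l γ (-Cp) :=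
      fRH_strictAntiOn m l γ hγ0 hl0 hgl hm ⟨hc, hcstar_gt.le⟩
        ⟨hcstar0, le_refl _⟩ hcstar_gt
    obtain ⟨c, ⟨⟨hc0, hclt⟩, hfc⟩, huniq⟩ :=
      exists_unique_gt m l γ (fRH m l γ (-Cp)) hγ0 hl0 hgl hm hA
    have hclpos : (0:ℝ) < c ^ l := Real.rpow_pos_of_pos hc0 l
    have hkey : c ^ l * (m / c ^ l) = m := by field_simp
    have hcltu : m / c ^ l < c := by
      rw [div_lt_iff₀ hclpos]
      calc m < c ^ (l + 1) := hclt
        _ = c * c ^ l := by rw [Real.rpow_add hc0, Real.rpow_one]; ring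
    have hmc : 0 < m / c ^ l := by positivity
    have habsc : |(-c)| = c := by rw [abs_neg, abs_of_pos hc0]
    have hRHfirst : (-(-c)) ^ l * (1 + (m / c ^ l - 1)) = m := by
      rw [neg_neg, show 1 + (m / c ^ l - 1) = m / c ^ l by ring]; exact hkey
    refine ⟨(m / c ^ l - 1, -c), ⟨⟨by simp only; linarith, by simp only; linarith⟩, ?_, ?_⟩, ?_⟩
    · show |(-c)| ^ l * (1 + (m / c ^ l - 1)) = |Cp| ^ l * (1 + Vp)
      rw [habs, habsc, show 1 + (m / c ^ l - 1) = m / c ^ l by ring, hkey, hm_def]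
    · show |(-c)| ^ l * ((1 + (m / c ^ l - 1)) ^ 2 + (-c) ^ 2 / γ)
          = |Cp| ^ l * ((1 + Vp) ^ 2 + Cp ^ 2 / γ)
      rw [mom_eq γ l (show Cp < 0 by linarith) hm_def.symm,
        mom_eq γ l (show -c < 0 by linarith) hRHfirst, neg_neg, hfc]
    · rintro ⟨V, C⟩ ⟨⟨hg1, hg2⟩, hRH1, hRH2⟩
      simp only at hg1 hg2
      have hC0 : C < 0 := by linarith
      have hcC : 0 < -C := by linarith
      have huV : 1 + V < -C := by linarith
      have habsC : |C| = -C := abs_of_neg hC0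
      simp only at hRH1 hRH2
      have hRH1' : (-C) ^ l * (1 + V) = m := by
        rw [habs, habsC] at hRH1
        exact hRH1.trans hm_def.symm
      have hfC : fRH m l γ (-C) = fRH m l γ (-Cp) := by
        rw [← mom_eq γ l hC0 hRH1', ← mom_eq γ l (show Cp < 0 by linarith) hm_def.symm]
        exact hRH2
      have hcond : m < (-C) ^ (l + 1) := by
        rw [Real.rpow_add hcC, Real.rpow_one]
        calc m = (-C) ^ l * (1 + V) := hRH1'.symm
          _ < (-C) ^ l * (-C) :=
              (mul_lt_mul_iff_right₀ (Real.rpow_pos_of_pos hcC l)).2 huV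
      have hcc : -C = c := huniq (-C) ⟨⟨hcC, hcond⟩, hfC⟩
      have hCeq : C = -c := by linarith
      have hVeq : V = m / c ^ l - 1 := by
        rw [hcc] at hRH1'
        have := eq_div_of_mul_eq hclpos.ne' (by linarith [hRH1'] : (1 + V) * c ^ l = m)
        linarith
      rw [Prod.mk.injEq]
      exact ⟨hVeq, hCeq⟩
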